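/- Let (c_i) be an n-periodic sequence satisfying D_{i,n-3+i} = 0 for all i. Then Σ_{k=0}^{⌊n/2⌋} (-1)^k (n - 2k) Σ_{|I|=k, I cyclically sparse} c_I = 0. -/

import Mathlib

/-- The continuant `D_{i,j}` of the sequence `c`, encoded by length:
`D c i ℓ` corresponds to `D_{i,j}` with `ℓ = j - i + 3`. -/
noncomputable def D (c : ℤ → ℂ) (i : ℤ) : ℕ → ℂ
  | 0 => 0
  | 1 => 1
  | 2 => 1
  | (m + 3) => D c i (m + 2) - c (i + m) * D c i (m + 1)


section helpers
variable {n : ℕ}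

lemma mod_add_mod_right (d x : ℕ) : (d + x % n) % n = (d + x) % n := by
  conv_lhs => rw [Nat.add_mod]
  conv_rhs => rw [Nat.add_mod]
  rw [Nat.mod_mod_of_dvd _ dvd_rfl]

lemma succ_mod (hn : 2 ≤ n) (x : ℕ) : (x % n + 1) % n = (x + 1) % n := by
  conv_rhs => rw [Nat.add_mod]
  rw [Nat.mod_eq_of_lt (show 1 < n by omega)]

lemma addl_inj (d : ℕ) {j j' : ℕ} (hj : j < n) (hj' : j' < n)
    (h : (d + j) % n = (d + j') % n) : j = j' := by
  have h2 : j ≡ j' [MOD n] := Nat.ModEq.add_left_cancel' d h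
  exact h2.eq_of_lt_of_lt hj hj'

lemma solve_mod (hn : 1 ≤ n) {d r : ℕ} (hd : d ≤ n) (hr1 : 1 ≤ r) (hrn : r ≤ n) :
    (r - 1 + n - d) % n < n ∧ (d + (r - 1 + n - d) % n) % n + 1 = r := by
  refine ⟨Nat.mod_lt _ (by omega), ?_⟩
  rw [mod_add_mod_right, show d + (r - 1 + n - d) = (r-1) + n by omega,
    Nat.add_mod_right, Nat.mod_eq_of_lt (by omega)]
  omega
end helpers

section count
variable {n : ℕ}

lemma mod_inj_Icc (hn : 1 ≤ n) {a b : ℕ} (ha : 1 ≤ a) (han : a ≤ n) (hb : 1 ≤ b)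
    (hbn : b ≤ n) (h : a % n = b % n) : a = b := by
  rcases eq_or_lt_of_le han with rfl | h1
  · rcases eq_or_lt_of_le hbn with rfl | h2
    · rfl
    · rw [Nat.mod_self, Nat.mod_eq_of_lt h2] at h; omega
  · rcases eq_or_lt_of_le hbn with rfl | h2
    · rw [Nat.mod_self, Nat.mod_eq_of_lt h1] at h; omega
    · rw [Nat.mod_eq_of_lt h1, Nat.mod_eq_of_lt h2] at h; exact h

lemma card_le_of_cycSp (hn : 1 ≤ n) {I : Finset ℕ} (hsub : I ⊆ Finset.Icc 1 n)
    (hsp : ∀ j ∈ I, j % n + 1 ∉ I) : 2 * I.card ≤ n := by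
  have hinj : Set.InjOn (fun j => j % n + 1) I := by
    intro a ha b hb h
    simp only at h
    have ha' := Finset.mem_Icc.mp (hsub ha)
    have hb' := Finset.mem_Icc.mp (hsub hb)
    exact mod_inj_Icc hn ha'.1 ha'.2 hb'.1 hb'.2 (by omega)
  have hcard : (I.image (fun j => j % n + 1)).card = I.card :=
    Finset.card_image_of_injOn hinj
  have hdisj : Disjoint I (I.image (fun j => j % n + 1)) := by
    rw [Finset.disjoint_left]
    intro x hx hx'
    obtain ⟨j, hj, hjx⟩ := Finset.mem_image.mp hx'
    exact hsp j hj (hjx ▸ hx)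
  have hsub2 : I ∪ I.image (fun j => j % n + 1) ⊆ Finset.Icc 1 n := by
    apply Finset.union_subset hsub
    intro x hx
    obtain ⟨j, hj, hjx⟩ := Finset.mem_image.mp hx
    have : j % n < n := Nat.mod_lt _ (by omega)
    rw [Finset.mem_Icc]; omega
  have := Finset.card_le_card hsub2
  rw [Finset.card_union_of_disjoint hdisj, hcard, Nat.card_Icc] at this
  omega

lemma card_preimage (hn : 1 ≤ n) {I : Finset ℕ} (hsub : I ⊆ Finset.Icc 1 n)
    {d : ℕ} (hd : d ≤ n) :
    ((Finset.range n).filter (fun i => (i + d) % n + 1 ∈ I)).card = I.card := by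
  apply Finset.card_nbij' (fun i => (i + d) % n + 1) (fun r => (r - 1 + n - d) % n)
  · intro i hi
    exact (Finset.mem_filter.mp hi).2
  · intro r hr
    have hr' := Finset.mem_Icc.mp (hsub hr)
    obtain ⟨h1, h2⟩ := solve_mod hn hd hr'.1 hr'.2
    dsimp only
    rw [Finset.mem_coe, Finset.mem_filter, Finset.mem_range]
    refine ⟨h1, ?_⟩
    rw [add_comm ((r - 1 + n - d) % n) d, h2]
    exact hr
  · intro i hi
    rw [Finset.mem_coe, Finset.mem_filter, Finset.mem_range] at hi
    simp only [Nat.add_sub_cancel]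
    have h1 : (i + d) % n + n - d = (i + d) % n + (n - d) := by omega
    rw [h1, add_comm ((i + d) % n) (n - d), mod_add_mod_right,
      show n - d + (i + d) = i + n by omega, Nat.add_mod_right,
      Nat.mod_eq_of_lt hi.1]
  · intro r hr
    have hr' := Finset.mem_Icc.mp (hsub hr)
    obtain ⟨h1, h2⟩ := solve_mod hn hd hr'.1 hr'.2
    dsimp only
    rw [add_comm ((r - 1 + n - d) % n) d]
    omega

end count

lemma card_allowed {n : ℕ} (hn : 4 ≤ n) {I : Finset ℕ} (hsub : I ⊆ Finset.Icc 1 n)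
    (hsp : ∀ j ∈ I, j % n + 1 ∉ I) :
    ((Finset.range n).filter
        (fun i => (i + (n-2)) % n + 1 ∉ I ∧ (i + (n-1)) % n + 1 ∉ I)).card
      = n - 2 * I.card := by
  have hn1 : 1 ≤ n := by omega
  have hkey := Finset.card_filter_add_card_filter_not (s := Finset.range n)
    (p := fun i => (i + (n-2)) % n + 1 ∈ I ∨ (i + (n-1)) % n + 1 ∈ I)
  have hdisj : Disjoint ((Finset.range n).filter (fun i => (i + (n-2)) % n + 1 ∈ I))
      ((Finset.range n).filter (fun i => (i + (n-1)) % n + 1 ∈ I)) := by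
    rw [Finset.disjoint_left]
    intro i hi hi'
    rw [Finset.mem_filter] at hi hi'
    apply hsp _ hi.2
    have hlt : (i + (n-2)) % n < n := Nat.mod_lt _ (by omega)
    have : ((i + (n-2)) % n + 1) % n + 1 = (i + (n-1)) % n + 1 := by
      rw [succ_mod (by omega), show i + (n-2) + 1 = i + (n-1) by omega]
    rw [this]
    exact hi'.2
  have hbad : ((Finset.range n).filter
      (fun i => (i + (n-2)) % n + 1 ∈ I ∨ (i + (n-1)) % n + 1 ∈ I)).card = 2 * I.card := by
    rw [Finset.filter_or, Finset.card_union_of_disjoint hdisj,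
      card_preimage hn1 hsub (by omega), card_preimage hn1 hsub (by omega)]
    ring
  have hfc : (Finset.range n).filter
        (fun i => (i + (n-2)) % n + 1 ∉ I ∧ (i + (n-1)) % n + 1 ∉ I)
      = (Finset.range n).filter
        (fun i => ¬((i + (n-2)) % n + 1 ∈ I ∨ (i + (n-1)) % n + 1 ∈ I)) := by
    apply Finset.filter_congr
    intro i _
    rw [not_or]
  rw [hfc]
  rw [hbad, Finset.card_range] at hkey
  have h2 := card_le_of_cycSp hn1 hsub hsp
  omega


lemma D_expansion (c : ℤ → ℂ) (i : ℤ) (m : ℕ) :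
    D c i (m + 2) = ∑ S ∈ (Finset.range m).powerset.filter (fun S => ∀ j ∈ S, j + 1 ∉ S),
      (-1 : ℂ) ^ S.card * ∏ j ∈ S, c (i + j) := by
  induction m using Nat.strong_induction_on with
  | _ m ih =>
    match m with
    | 0 => simp [D, Finset.filter_singleton]
    | 1 =>
      have : (Finset.range 1).powerset.filter (fun S => ∀ j ∈ S, j + 1 ∉ S)
          = {∅, {0}} := by decide
      rw [this]
      simp [D, Finset.sum_pair (show (∅:Finset ℕ) ≠ {0} by decide), sub_eq_add_neg]
    | (m + 2) =>
      have h1 := ih (m + 1) (by omega)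
      have h0 := ih m (by omega)
      have hD : D c i (m + 2 + 2) = D c i (m + 1 + 2) - c (i + (m + 1)) * D c i (m + 2) := by
        show D c i (m + 1 + 3) = _
        rw [D]
        push_cast
        ring_nf
      rw [hD, h1, h0]
      set P : Finset ℕ → Prop := fun S => ∀ j ∈ S, j + 1 ∉ S with hP
      have hsplit := Finset.sum_filter_add_sum_filter_not
        ((Finset.range (m+2)).powerset.filter P) (fun S => (m+1) ∈ S)
        (fun S => (-1 : ℂ) ^ S.card * ∏ j ∈ S, c (i + j))
      rw [← hsplit]
      have e1 : ((Finset.range (m+2)).powerset.filter P).filter (fun S => ¬ (m+1) ∈ S)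
          = (Finset.range (m+1)).powerset.filter P := by
        ext S
        simp only [Finset.mem_filter, Finset.mem_powerset, Finset.subset_iff, Finset.mem_range]
        constructor
        · rintro ⟨⟨hsub, hp⟩, hnm⟩
          refine ⟨fun x hx => ?_, hp⟩
          have := hsub hx
          have : x ≠ m + 1 := fun h => hnm (h ▸ hx)
          omega
        · rintro ⟨hsub, hp⟩
          exact ⟨⟨fun x hx => by have := hsub hx; omega, hp⟩,
            fun h => by have := hsub h; omega⟩
      have e2 : ∑ S ∈ ((Finset.range (m+2)).powerset.filter P).filter (fun S => (m+1) ∈ S),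
            ((-1 : ℂ) ^ S.card * ∏ j ∈ S, c (i + j))
          = ∑ T ∈ (Finset.range m).powerset.filter P,
            -(c (i + ((m:ℤ) + 1)) * ((-1 : ℂ) ^ T.card * ∏ j ∈ T, c (i + j))) := by
        refine Finset.sum_nbij' (fun S => S.erase (m+1)) (fun T => insert (m+1) T) ?_ ?_ ?_ ?_ ?_
        · intro S hS
          simp only [Finset.mem_filter, Finset.mem_powerset] at hS ⊢
          obtain ⟨⟨hsub, hp⟩, hm⟩ := hS
          refine ⟨fun x hx => ?_, fun j hj => ?_⟩
          · rw [Finset.mem_erase] at hx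
            have h1 := hsub hx.2
            rw [Finset.mem_range] at h1 ⊢
            have : x ≠ m := by
              rintro rfl
              exact hp x hx.2 hm
            omega
          · rw [Finset.mem_erase] at hj
            intro hc
            exact hp j hj.2 (Finset.mem_of_mem_erase hc)
        · intro T hT
          simp only [Finset.mem_filter, Finset.mem_powerset] at hT ⊢
          obtain ⟨hsub, hp⟩ := hT
          have hmT : m + 1 ∉ T := fun h => absurd (Finset.mem_range.mp (hsub h)) (by omega)
          refine ⟨⟨fun x hx => ?_, fun j hj => ?_⟩, Finset.mem_insert_self _ _⟩
          · rw [Finset.mem_insert] at hx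
            rw [Finset.mem_range]
            rcases hx with rfl | hx
            · omega
            · have := hsub hx; rw [Finset.mem_range] at this; omega
          · rw [Finset.mem_insert] at hj
            intro hc
            rw [Finset.mem_insert] at hc
            rcases hj with rfl | hj
            · rcases hc with hc | hc
              · omega
              · have := hsub hc; rw [Finset.mem_range] at this; omega
            · rcases hc with hc | hc
              · have := hsub hj; rw [Finset.mem_range] at this; omega
              · exact hp j hj hc
        · intro S hS
          simp only [Finset.mem_filter] at hS
          exact Finset.insert_erase hS.2
        · intro T hT
          simp only [Finset.mem_filter, Finset.mem_powerset] at hT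
          exact Finset.erase_insert (fun h => absurd (Finset.mem_range.mp (hT.1 h)) (by omega))
        · intro S hS
          simp only [Finset.mem_filter] at hS
          have hm : m + 1 ∈ S := hS.2
          have hcard : S.card = (S.erase (m+1)).card + 1 := by
            rw [Finset.card_erase_of_mem hm]
            have : 1 ≤ S.card := Finset.card_pos.mpr ⟨_, hm⟩
            omega
          have hprod : ∏ j ∈ S, c (i + j) = c (i + ((m:ℤ)+1)) * ∏ j ∈ S.erase (m+1), c (i + j) := by
            rw [← Finset.mul_prod_erase S _ hm]
            push_cast
            ring_nf
          rw [hcard, hprod]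
          ring
      rw [e1, e2, Finset.sum_neg_distrib]
      rw [← Finset.mul_sum]
      ring

lemma per_mul (c : ℤ → ℂ) (n : ℕ) (hper : ∀ i : ℤ, c (i + n) = c i) (x : ℤ) (t : ℕ) :
    c (x + n * t) = c x := by
  induction t with
  | zero => simp
  | succ t ih =>
    rw [show x + (n:ℤ) * (t+1 : ℕ) = (x + n * t) + n by push_cast; ring, hper, ih]

/-- If the `n`-periodic sequence `c` satisfies `D_{i,n-3+i} = 0` for all `i`,
then `Σ_{k=0}^{⌊n/2⌋} (-1)^k (n-2k) F_k = 0`, where `F_k` is the sum of `c_I`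
over cyclically sparse subsets `I ⊆ {1,…,n}` of size `k`. -/
theorem stmt8 (c : ℤ → ℂ) (n : ℕ) (hn : 4 ≤ n)
    (hper : ∀ i : ℤ, c (i + n) = c i)
    (hD : ∀ i : ℤ, D c i n = 0) :
    ∑ k ∈ Finset.range (n / 2 + 1), (-1 : ℂ) ^ k * ((n : ℂ) - 2 * k) *
      ∑ I ∈ (Finset.Icc 1 n).powerset.filter
          (fun I => (∀ j ∈ I, (j % n + 1) ∉ I) ∧ I.card = k),
        ∏ j ∈ I, c (j : ℤ) = 0 := by
  have hn1 : 1 ≤ n := by omega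
  set Tn : Finset (Finset ℕ) :=
    (Finset.Icc 1 n).powerset.filter (fun I => ∀ j ∈ I, (j % n + 1) ∉ I) with hTn
  have hmemTn : ∀ I ∈ Tn, I ⊆ Finset.Icc 1 n ∧ ∀ j ∈ I, (j % n + 1) ∉ I := by
    intro I hI
    rw [hTn, Finset.mem_filter, Finset.mem_powerset] at hI
    exact hI
  -- Step 1 : rewrite LHS as a single sum over Tn
  have hstep1 : ∑ k ∈ Finset.range (n / 2 + 1), (-1 : ℂ) ^ k * ((n : ℂ) - 2 * k) *
      ∑ I ∈ (Finset.Icc 1 n).powerset.filter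
          (fun I => (∀ j ∈ I, (j % n + 1) ∉ I) ∧ I.card = k),
        ∏ j ∈ I, c (j : ℤ)
      = ∑ I ∈ Tn, (-1 : ℂ) ^ I.card * ((n : ℂ) - 2 * I.card) * ∏ j ∈ I, c (j : ℤ) := by
    have hfib := Finset.sum_fiberwise_of_maps_to (s := Tn) (g := Finset.card)
      (t := Finset.range (n / 2 + 1))
      (fun I hI => by
        rw [Finset.mem_range]
        have h := card_le_of_cycSp hn1 (hmemTn I hI).1 (hmemTn I hI).2
        omega)
      (fun I : Finset ℕ => (-1 : ℂ) ^ I.card * ((n : ℂ) - 2 * I.card) * ∏ j ∈ I, c (j : ℤ))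
    rw [← hfib]
    apply Finset.sum_congr rfl
    intro k _
    have hfe : Tn.filter (fun I => I.card = k)
        = (Finset.Icc 1 n).powerset.filter
          (fun I => (∀ j ∈ I, (j % n + 1) ∉ I) ∧ I.card = k) := by
      rw [hTn, Finset.filter_filter]
    rw [← hfe, Finset.mul_sum]
    apply Finset.sum_congr rfl
    intro I hI
    have hk : I.card = k := (Finset.mem_filter.mp hI).2
    rw [hk]
  rw [hstep1]
  -- the sparse subsets of a path of length n-2
  set Sp : Finset (Finset ℕ) :=
    (Finset.range (n-2)).powerset.filter (fun S => ∀ j ∈ S, j + 1 ∉ S) with hSp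
  have hmemSp : ∀ S ∈ Sp, S ⊆ Finset.range (n-2) ∧ ∀ j ∈ S, j + 1 ∉ S := by
    intro S hS
    rw [hSp, Finset.mem_filter, Finset.mem_powerset] at hS
    exact hS
  -- Step 2 : key double counting
  have hzero : (0 : ℂ) = ∑ i ∈ Finset.range n, D c ((i : ℤ) + 1) n := by
    simp [hD]
  have hexp : ∀ i : ℕ, i ∈ Finset.range n → D c ((i : ℤ) + 1) n
      = ∑ S ∈ Sp, (-1 : ℂ) ^ S.card * ∏ j ∈ S, c (((i + j) % n + 1 : ℕ) : ℤ) := by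
    intro i hi
    rw [Finset.mem_range] at hi
    conv_lhs => rw [show n = (n - 2) + 2 by omega]
    rw [D_expansion]
    apply Finset.sum_congr rfl
    intro S hS
    congr 1
    apply Finset.prod_congr rfl
    intro j hj
    have hjr : j < n - 2 := Finset.mem_range.mp ((hmemSp S hS).1 hj)
    have hcast : ((i : ℤ) + 1 + j) = ((((i + j) % n + 1 : ℕ)) : ℤ) + (n : ℤ) * ((i + j) / n : ℕ) := by
      have h : ((i + j : ℕ) : ℤ) = (n : ℤ) * ((i + j) / n : ℕ) + ((i + j) % n : ℕ) := by
        exact_mod_cast (Nat.div_add_mod (i + j) n).symm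
      push_cast at h ⊢
      linarith
    rw [hcast, per_mul c n hper]
  rw [Finset.sum_congr rfl hexp] at hzero
  set allowed : Finset ℕ → Finset ℕ := fun I => (Finset.range n).filter
      (fun i => (i + (n-2)) % n + 1 ∉ I ∧ (i + (n-1)) % n + 1 ∉ I) with hallow
  have hbij : ∑ i ∈ Finset.range n, ∑ S ∈ Sp,
        ((-1:ℂ)^S.card * ∏ j ∈ S, c (((i+j) % n + 1 : ℕ) : ℤ))
      = ∑ I ∈ Tn, ∑ i ∈ allowed I, ((-1:ℂ)^I.card * ∏ r ∈ I, c ((r:ℕ) : ℤ)) := by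
    rw [Finset.sum_sigma' (Finset.range n) (fun _ => Sp)
      (fun i S => ((-1:ℂ)^S.card * ∏ j ∈ S, c (((i+j) % n + 1 : ℕ) : ℤ)))]
    rw [Finset.sum_sigma' Tn allowed
      (fun I _ => ((-1:ℂ)^I.card * ∏ r ∈ I, c ((r:ℕ) : ℤ)))]
    refine Finset.sum_nbij'
      (fun p => ⟨p.2.image (fun j => (p.1 + j) % n + 1), p.1⟩)
      (fun q => ⟨q.2, (Finset.range (n-2)).filter (fun j => (q.2 + j) % n + 1 ∈ q.1)⟩)
      ?_ ?_ ?_ ?_ ?_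
    · rintro ⟨i, S⟩ hp
      rw [Finset.mem_sigma] at hp ⊢
      obtain ⟨hi, hS⟩ := hp
      rw [Finset.mem_range] at hi
      obtain ⟨hSsub, hSsp⟩ := hmemSp S hS
      dsimp only
      constructor
      · rw [hTn, Finset.mem_filter, Finset.mem_powerset]
        constructor
        · intro x hx
          obtain ⟨j, hj, rfl⟩ := Finset.mem_image.mp hx
          have : (i+j) % n < n := Nat.mod_lt _ (by omega)
          rw [Finset.mem_Icc]; omega
        · intro r hr hr'
          obtain ⟨j, hj, rfl⟩ := Finset.mem_image.mp hr
          obtain ⟨j', hj', hj'e⟩ := Finset.mem_image.mp hr'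
          have hjlt : j < n - 2 := Finset.mem_range.mp (hSsub hj)
          have hj'lt : j' < n - 2 := Finset.mem_range.mp (hSsub hj')
          have hsucc : ((i+j) % n + 1) % n + 1 = (i+(j+1)) % n + 1 := by
            rw [succ_mod (by omega), show i+j+1 = i+(j+1) by omega]
          rw [hsucc] at hj'e
          have he2 : (i + j') % n = (i + (j+1)) % n := by omega
          have : j' = j + 1 := addl_inj i (by omega) (by omega) he2
          exact hSsp j hj (this ▸ hj')
      · rw [hallow]
        dsimp only
        rw [Finset.mem_filter, Finset.mem_range]
        refine ⟨hi, ?_, ?_⟩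
        · intro hcon
          obtain ⟨j', hj', he⟩ := Finset.mem_image.mp hcon
          have hj'lt : j' < n - 2 := Finset.mem_range.mp (hSsub hj')
          have he2 : (i + j') % n = (i + (n-2)) % n := by omega
          have : j' = n - 2 := addl_inj i (by omega) (by omega) he2
          omega
        · intro hcon
          obtain ⟨j', hj', he⟩ := Finset.mem_image.mp hcon
          have hj'lt : j' < n - 2 := Finset.mem_range.mp (hSsub hj')
          have he2 : (i + j') % n = (i + (n-1)) % n := by omega
          have : j' = n - 1 := addl_inj i (by omega) (by omega) he2
          omega
    · rintro ⟨I, i⟩ hq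
      rw [Finset.mem_sigma] at hq ⊢
      obtain ⟨hI, hiA⟩ := hq
      rw [hallow] at hiA
      dsimp only at hiA ⊢
      rw [Finset.mem_filter, Finset.mem_range] at hiA
      obtain ⟨hi, hc2, hc1⟩ := hiA
      refine ⟨Finset.mem_range.mpr hi, ?_⟩
      rw [hSp, Finset.mem_filter, Finset.mem_powerset]
      refine ⟨Finset.filter_subset _ _, ?_⟩
      intro j hj hj1
      rw [Finset.mem_filter, Finset.mem_range] at hj hj1
      apply (hmemTn I hI).2 _ hj.2
      have : ((i+j) % n + 1) % n + 1 = (i+(j+1)) % n + 1 := by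
        rw [succ_mod (by omega), show i+j+1 = i+(j+1) by omega]
      rw [this]
      exact hj1.2
    · rintro ⟨i, S⟩ hp
      rw [Finset.mem_sigma] at hp
      obtain ⟨hi, hS⟩ := hp
      rw [Finset.mem_range] at hi
      obtain ⟨hSsub, hSsp⟩ := hmemSp S hS
      dsimp only
      have hfilt : (Finset.range (n-2)).filter
          (fun j => (i + j) % n + 1 ∈ S.image (fun j => (i + j) % n + 1)) = S := by
        ext j
        simp only [Finset.mem_filter, Finset.mem_range, Finset.mem_image]
        constructor
        · rintro ⟨hjlt, j', hj', he⟩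
          have hj'lt : j' < n - 2 := Finset.mem_range.mp (hSsub hj')
          have he2 : (i + j') % n = (i + j) % n := by omega
          have : j' = j := addl_inj i (by omega) (by omega) he2
          exact this ▸ hj'
        · intro hj
          exact ⟨Finset.mem_range.mp (hSsub hj), j, hj, rfl⟩
      rw [hfilt]
    · rintro ⟨I, i⟩ hq
      rw [Finset.mem_sigma] at hq
      obtain ⟨hI, hiA⟩ := hq
      rw [hallow] at hiA
      dsimp only at hiA
      rw [Finset.mem_filter, Finset.mem_range] at hiA
      obtain ⟨hi, hc2, hc1⟩ := hiA
      dsimp only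
      have himg : ((Finset.range (n-2)).filter (fun j => (i + j) % n + 1 ∈ I)).image
          (fun j => (i + j) % n + 1) = I := by
        ext r
        simp only [Finset.mem_image, Finset.mem_filter, Finset.mem_range]
        constructor
        · rintro ⟨j, ⟨hjlt, hjI⟩, rfl⟩
          exact hjI
        · intro hr
          have hr' := Finset.mem_Icc.mp ((hmemTn I hI).1 hr)
          obtain ⟨hlt, heq⟩ := solve_mod hn1 (d := i) (le_of_lt hi) hr'.1 hr'.2
          refine ⟨(r - 1 + n - i) % n, ⟨?_, ?_⟩, heq⟩
          · rcases Nat.lt_or_ge ((r - 1 + n - i) % n) (n-2) with h | h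
            · exact h
            · exfalso
              rcases eq_or_lt_of_le h with h2 | h2
              · rw [← h2] at heq
                exact hc2 (heq ▸ hr)
              · have : (r - 1 + n - i) % n = n - 1 := by omega
                rw [this] at heq
                exact hc1 (heq ▸ hr)
          · rw [heq]; exact hr
      rw [himg]
    · rintro ⟨i, S⟩ hp
      rw [Finset.mem_sigma] at hp
      obtain ⟨hi, hS⟩ := hp
      rw [Finset.mem_range] at hi
      obtain ⟨hSsub, hSsp⟩ := hmemSp S hS
      dsimp only
      have hinj : ∀ a ∈ S, ∀ b ∈ S, (i + a) % n + 1 = (i + b) % n + 1 → a = b := by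
        intro a ha b hb h
        have halt : a < n - 2 := Finset.mem_range.mp (hSsub ha)
        have hblt : b < n - 2 := Finset.mem_range.mp (hSsub hb)
        exact addl_inj i (by omega) (by omega) (by omega : (i+a) % n = (i+b) % n)
      rw [Finset.card_image_of_injOn (fun a ha b hb h => hinj a ha b hb h),
        Finset.prod_image hinj]
  have hfinal : ∑ I ∈ Tn, ∑ _i ∈ allowed I, ((-1:ℂ)^I.card * ∏ r ∈ I, c ((r:ℕ) : ℤ))
      = ∑ I ∈ Tn, (-1:ℂ)^I.card * ((n:ℂ) - 2*I.card) * ∏ r ∈ I, c ((r:ℕ) : ℤ) := by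
    apply Finset.sum_congr rfl
    intro I hI
    rw [Finset.sum_const, hallow]
    dsimp only
    rw [card_allowed hn (hmemTn I hI).1 (hmemTn I hI).2, nsmul_eq_mul,
      Nat.cast_sub (card_le_of_cycSp hn1 (hmemTn I hI).1 (hmemTn I hI).2)]
    push_cast
    ring
  rw [hbij, hfinal] at hzero
  exact hzero.symm
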